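/- Let I be a Borel-fixed monomial ideal of S. Then the integral closure Ī of I is again a Borel-fixed monomial ideal. -/

import Mathlib

open MvPolynomial

/-- An ideal of `K[x_1, …, x_n]` is a monomial ideal if it is generated by monomials. -/
def IsMonomialIdeal {K : Type*} [Field K] {n : ℕ} (I : Ideal (MvPolynomial (Fin n) K)) : Prop :=
  ∃ G : Set (Fin n →₀ ℕ),
    I = Ideal.span ((fun a => (monomial a (1 : K) : MvPolynomial (Fin n) K)) '' G)

/-- An ideal `I` is Borel-fixed if `φ(I) ⊆ I` for every `K`-algebra endomorphism `φ`
of `K[x_1, …, x_n]` sending `x_j ↦ ∑_{i ≤ j} c i j • x_i` with `c j j ≠ 0` for each `j`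
(i.e. `φ` is induced by an invertible upper triangular matrix over `K`). -/
def IsBorelFixed {K : Type*} [Field K] {n : ℕ} (I : Ideal (MvPolynomial (Fin n) K)) : Prop :=
  ∀ c : Fin n → Fin n → K, (∀ j, c j j ≠ 0) →
    ∀ f ∈ I,
      (aeval (fun j : Fin n =>
          ∑ i ∈ Finset.univ.filter (fun i : Fin n => i ≤ j),
            (C (c i j) * X i : MvPolynomial (Fin n) K))) f ∈ I

/-- The integral closure of a monomial ideal `I`: the ideal generated by all
monomials `u` such that `u ^ k ∈ I ^ k` for some integer `k ≥ 1`. -/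
noncomputable def monomialIntegralClosure {K : Type*} [Field K] {n : ℕ}
    (I : Ideal (MvPolynomial (Fin n) K)) : Ideal (MvPolynomial (Fin n) K) :=
  Ideal.span {m | ∃ a : Fin n →₀ ℕ, m = (monomial a (1 : K) : MvPolynomial (Fin n) K) ∧
    ∃ k : ℕ, 1 ≤ k ∧ m ^ k ∈ I ^ k}

section Spike
variable {n : ℕ}

local notation "V" => (Fin n →₀ ℕ)

lemma nsmul_cancel {m : ℕ} (hm : m ≠ 0) {a b : V} (h : m • a = m • b) : a = b := by
  ext i
  have := congrArg (fun f : V => f i) h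
  simp only [Finsupp.smul_apply, smul_eq_mul] at this
  exact Nat.eq_of_mul_eq_mul_left (Nat.pos_of_ne_zero hm) this

/-- `v` is a spike of `S` if any multiset of elements of `S` averaging to `v`
is constant `v`. -/
def IsSpike (S : Finset V) (v : V) : Prop :=
  v ∈ S ∧ ∀ l : Multiset V, (∀ x ∈ l, x ∈ S) → l.sum = Multiset.card l • v →
    ∀ x ∈ l, x = v

lemma spike_lift (S : Finset V) (b : V) (l' : Multiset V)
    (h1 : ∀ x ∈ l', x ∈ S.erase b) (h2 : l'.sum = Multiset.card l' • b)
    (h3 : Multiset.card l' ≠ 0) (v : V) (hv : IsSpike (S.erase b) v) :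
    IsSpike S v := by
  classical
  set m := Multiset.card l' with hm
  refine ⟨Finset.mem_of_mem_erase hv.1, ?_⟩
  intro l hl hsum
  set M : Multiset V := l.bind (fun x => if x = b then l' else Multiset.replicate m x) with hM
  have hcardM : Multiset.card M = Multiset.card l * m := by
    rw [hM, Multiset.card_bind]
    have : l.map (Multiset.card ∘ fun x => if x = b then l' else Multiset.replicate m x)
        = l.map (fun _ => m) := by
      apply Multiset.map_congr rfl
      intro x _
      by_cases hx : x = b <;> simp [hx, hm]
    rw [this, Multiset.map_const', Multiset.sum_replicate, smul_eq_mul]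
  have hsumM : M.sum = (Multiset.card l * m) • v := by
    rw [hM, Multiset.sum_bind]
    have : l.map (fun x => (if x = b then l' else Multiset.replicate m x).sum)
        = l.map (fun x => m • x) := by
      apply Multiset.map_congr rfl
      intro x _
      by_cases hx : x = b
      · simp [hx, h2]
      · simp [hx, Multiset.sum_replicate]
    rw [this, ← Multiset.smul_sum, hsum, smul_smul, Nat.mul_comm]
  have hmemM : ∀ x ∈ M, x ∈ S.erase b := by
    intro x hx
    rw [hM, Multiset.mem_bind] at hx
    obtain ⟨y, hy, hxy⟩ := hx
    by_cases hyb : y = b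
    · rw [if_pos hyb] at hxy; exact h1 x hxy
    · rw [if_neg hyb, Multiset.eq_of_mem_replicate hxy] at *
      exact Finset.mem_erase.2 ⟨hyb, hl y hy⟩
  have hall : ∀ x ∈ M, x = v := hv.2 M hmemM (by rw [hsumM, hcardM])
  intro x hx
  by_cases hxb : x = b
  · exfalso
    -- all elements of l' equal v, so m • v = m • b, so v = b, contradiction
    have hl'v : ∀ y ∈ l', y = v := by
      intro y hy
      refine hall y ?_
      rw [hM, Multiset.mem_bind]
      exact ⟨x, hx, by rw [if_pos hxb]; exact hy⟩
    have : l'.sum = m • v := by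
      rw [Multiset.eq_replicate_card.2 hl'v, Multiset.sum_replicate]
    have hvb : v = b := nsmul_cancel h3 (by rw [← this, h2])
    exact (Finset.mem_erase.1 hv.1).1 hvb
  · refine hall x ?_
    rw [hM, Multiset.mem_bind]
    refine ⟨x, hx, ?_⟩
    rw [if_neg hxb]
    exact Multiset.mem_replicate.2 ⟨h3, rfl⟩

end Spike

section Spike2
variable {n : ℕ}
local notation "V" => (Fin n →₀ ℕ)

/-- Combine per-element spike decompositions into one with a uniform scaling factor. -/
lemma combo (P : V → Prop) (l' : Multiset V)
    (h : ∀ s ∈ l', ∃ m : Multiset V, Multiset.card m ≠ 0 ∧ (∀ x ∈ m, P x) ∧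
      m.sum = Multiset.card m • s) :
    ∃ (M : Multiset V) (c : ℕ), c ≠ 0 ∧ (∀ x ∈ M, P x) ∧
      Multiset.card M = c * Multiset.card l' ∧ M.sum = c • l'.sum := by
  induction l' using Multiset.induction with
  | empty => exact ⟨0, 1, one_ne_zero, by simp, by simp, by simp⟩
  | cons s l' ih =>
    obtain ⟨ms, hms0, hmsP, hmssum⟩ := h s (Multiset.mem_cons_self s l')
    obtain ⟨M, c, hc0, hMP, hMcard, hMsum⟩ := ih (fun x hx => h x (Multiset.mem_cons_of_mem hx))
    set cs := Multiset.card ms with hcs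
    refine ⟨c • ms + cs • M, c * cs, Nat.mul_ne_zero hc0 hms0, ?_, ?_, ?_⟩
    · intro x hx
      rcases Multiset.mem_add.1 hx with hx | hx
      · exact hmsP x (Multiset.mem_of_mem_nsmul hx)
      · exact hMP x (Multiset.mem_of_mem_nsmul hx)
    · rw [Multiset.card_add, Multiset.card_nsmul, Multiset.card_nsmul, hMcard,
        Multiset.card_cons]
      ring
    · rw [Multiset.sum_add, Multiset.sum_nsmul, Multiset.sum_nsmul, hmssum, hMsum,
        Multiset.sum_cons, smul_add, smul_smul, smul_smul, Nat.mul_comm c cs]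

lemma spike_decomp (S : Finset V) : ∀ b ∈ S, ∃ l : Multiset V,
    Multiset.card l ≠ 0 ∧ (∀ x ∈ l, IsSpike S x) ∧ l.sum = Multiset.card l • b := by
  classical
  induction S using Finset.strongInduction with
  | _ S ih =>
    intro b hb
    by_cases hsp : IsSpike S b
    · exact ⟨{b}, by simp, by simpa using hsp, by simp⟩
    · have : ∃ l : Multiset V, (∀ x ∈ l, x ∈ S) ∧ l.sum = Multiset.card l • b ∧
          ∃ x ∈ l, x ≠ b := by
        by_contra hcon
        push_neg at hcon
        exact hsp ⟨hb, fun l hl hsum x hx => hcon l hl hsum x hx⟩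
      obtain ⟨l, hlS, hlsum, x0, hx0l, hx0b⟩ := this
      set t := l.count b with ht
      set l' := l.filter (· ≠ b) with hl'
      have hsplit : l.filter (· = b) + l' = l := Multiset.filter_add_not _ l
      have hfeq : l.filter (· = b) = Multiset.replicate t b := Multiset.filter_eq' l b
      have hcardl : t + Multiset.card l' = Multiset.card l := by
        rw [← hsplit, Multiset.card_add, hfeq, Multiset.card_replicate]
      have hsuml' : l'.sum = Multiset.card l' • b := by
        have h1 : t • b + l'.sum = l.sum := by
          rw [← Multiset.sum_replicate, ← hfeq, ← Multiset.sum_add, hsplit]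
        have h2 : t • b + l'.sum = t • b + Multiset.card l' • b := by
          rw [h1, hlsum, ← hcardl, add_smul]
        exact add_left_cancel h2
      have hl'card : Multiset.card l' ≠ 0 := by
        intro hc
        rw [Multiset.card_eq_zero] at hc
        have : x0 ∈ l' := by
          rw [hl', Multiset.mem_filter]
          exact ⟨hx0l, hx0b⟩
        simp [hc] at this
      have hl'mem : ∀ x ∈ l', x ∈ S.erase b := by
        intro x hx
        rw [hl', Multiset.mem_filter] at hx
        exact Finset.mem_erase.2 ⟨hx.2, hlS x hx.1⟩
      obtain ⟨M, c, hc0, hMP, hMcard, hMsum⟩ :=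
        combo (IsSpike (S.erase b)) l'
          (fun s hs => ih (S.erase b) (Finset.erase_ssubset hb) s (hl'mem s hs))
      refine ⟨M, ?_, ?_, ?_⟩
      · rw [hMcard]; exact Nat.mul_ne_zero hc0 hl'card
      · exact fun x hx => spike_lift S b l' hl'mem hsuml' hl'card x (hMP x hx)
      · rw [hMsum, hsuml', hMcard, smul_smul]

end Spike2

section Poly
variable {K : Type*} [Field K] {n : ℕ}
local notation "V" => (Fin n →₀ ℕ)
local notation "R" => (MvPolynomial (Fin n) K)

/-- Every monomial in the support of an element of a monomial ideal lies in the ideal. -/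
lemma support_mem_monomialIdeal {J : Ideal R} (hJ : IsMonomialIdeal J)
    {p : R} (hp : p ∈ J) : ∀ d ∈ p.support, (monomial d (1 : K) : R) ∈ J := by
  classical
  obtain ⟨G, rfl⟩ := hJ
  set T := (fun a => (monomial a (1 : K) : R)) '' G with hT
  refine Submodule.span_induction ?_ ?_ ?_ ?_ hp
  · rintro q ⟨g, hg, rfl⟩ d hd
    rw [MvPolynomial.support_monomial] at hd
    simp only [one_ne_zero, if_false, Finset.mem_singleton] at hd
    rw [hd]
    exact Ideal.subset_span ⟨g, hg, rfl⟩
  · intro d hd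
    simp at hd
  · intro q r _ _ hq hr d hd
    rcases Finset.mem_union.1 (MvPolynomial.support_add hd) with h | h
    · exact hq d h
    · exact hr d h
  · intro r q _ hq d hd
    have := MvPolynomial.support_mul r q hd
    rw [Finset.mem_add] at this
    obtain ⟨a, ha, b, hb, rfl⟩ := this
    have : (monomial (a + b) (1 : K) : R) = monomial a 1 * monomial b 1 := by
      rw [MvPolynomial.monomial_mul, one_mul]
    rw [this]
    exact Ideal.mul_mem_left _ _ (hq b hb)

lemma IsMonomialIdeal.mul {I J : Ideal R} (hI : IsMonomialIdeal I)
    (hJ : IsMonomialIdeal J) : IsMonomialIdeal (I * J) := by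
  obtain ⟨G, rfl⟩ := hI
  obtain ⟨H, rfl⟩ := hJ
  refine ⟨{a | ∃ g ∈ G, ∃ h ∈ H, a = g + h}, ?_⟩
  rw [Ideal.span_mul_span']
  congr 1
  ext p
  constructor
  · rintro ⟨x, ⟨g, hg, rfl⟩, y, ⟨h, hh, rfl⟩, rfl⟩
    exact ⟨g + h, ⟨g, hg, h, hh, rfl⟩, by simp [MvPolynomial.monomial_mul]⟩
  · rintro ⟨a, ⟨g, hg, h, hh, rfl⟩, rfl⟩
    exact ⟨monomial g 1, ⟨g, hg, rfl⟩, monomial h 1, ⟨h, hh, rfl⟩,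
      by simp [MvPolynomial.monomial_mul]⟩

lemma IsMonomialIdeal.pow {I : Ideal R} (hI : IsMonomialIdeal I) (k : ℕ) :
    IsMonomialIdeal (I ^ k) := by
  induction k with
  | zero =>
    refine ⟨{0}, ?_⟩
    rw [pow_zero, Ideal.one_eq_top]
    rw [Set.image_singleton]
    symm
    rw [Ideal.span_singleton_eq_top]
    exact IsUnit.of_mul_eq_one 1 (by simp [MvPolynomial.monomial_zero'])
  | succ k ih =>
    rw [pow_succ]
    exact ih.mul hI

/-- support of a power is contained in sums of support elements. -/
lemma support_pow_sum (f : R) (k : ℕ) :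
    ∀ q ∈ (f ^ k).support, ∃ l : Multiset V, Multiset.card l = k ∧
      (∀ x ∈ l, x ∈ f.support) ∧ l.sum = q := by
  classical
  induction k with
  | zero =>
    intro q hq
    rw [pow_zero] at hq
    have : q = 0 := by
      by_contra hq0
      rw [MvPolynomial.mem_support_iff, MvPolynomial.coeff_one] at hq
      apply hq
      simp [hq0, Ne.symm hq0]
    exact ⟨0, by simp, by simp, by simp [this]⟩
  | succ k ih =>
    intro q hq
    rw [pow_succ] at hq
    have := MvPolynomial.support_mul _ _ hq
    rw [Finset.mem_add] at this
    obtain ⟨a, ha, b, hb, rfl⟩ := this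
    obtain ⟨l, hlcard, hlmem, hlsum⟩ := ih a ha
    exact ⟨b ::ₘ l, by simp [hlcard], by
      intro x hx
      rcases Multiset.mem_cons.1 hx with h | h
      · exact h ▸ hb
      · exact hlmem x h, by rw [Multiset.sum_cons, hlsum, add_comm]⟩

/-- The leading-coefficient property at spikes of the support. -/
lemma coeff_pow_spike (f : R) (v : V) (hv : IsSpike f.support v) (k : ℕ) :
    MvPolynomial.coeff (k • v) (f ^ k) = (MvPolynomial.coeff v f) ^ k := by
  classical
  induction k with
  | zero => simp [MvPolynomial.coeff_one]
  | succ k ih =>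
    rw [pow_succ, MvPolynomial.coeff_mul]
    rw [Finset.sum_eq_single (k • v, v)]
    · rw [ih, pow_succ]
    · rintro ⟨p, q⟩ hpq hne
      rw [Finset.HasAntidiagonal.mem_antidiagonal] at hpq
      by_contra h0
      have hp : p ∈ (f ^ k).support := MvPolynomial.mem_support_iff.2 fun h => h0 (by simp [h])
      have hq : q ∈ f.support := MvPolynomial.mem_support_iff.2 fun h => h0 (by simp [h])
      obtain ⟨l, hlcard, hlmem, hlsum⟩ := support_pow_sum f k p hp
      have hall : ∀ x ∈ q ::ₘ l, x = v := by
        apply hv.2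
        · intro x hx
          rcases Multiset.mem_cons.1 hx with h | h
          · exact h ▸ hq
          · exact hlmem x h
        · rw [Multiset.sum_cons, hlsum, Multiset.card_cons, hlcard, add_comm q p, hpq,
            succ_nsmul, add_comm]
      have hqv : q = v := hall q (Multiset.mem_cons_self _ _)
      have hpv : p = k • v := by
        have : ∀ x ∈ l, x = v := fun x hx => hall x (Multiset.mem_cons_of_mem hx)
        rw [← hlsum, Multiset.eq_replicate_card.2 this, Multiset.sum_replicate, hlcard]
      exact hne (by rw [hqv, hpv])
    · intro h
      exfalso
      apply h
      rw [Finset.HasAntidiagonal.mem_antidiagonal, succ_nsmul]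

end Poly

section Main
variable {K : Type*} [Field K] {n : ℕ}
local notation "R" => (MvPolynomial (Fin n) K)

lemma multiset_prod_mem_pow (J : Ideal R) (l : Multiset R) (h : ∀ x ∈ l, x ∈ J) :
    l.prod ∈ J ^ (Multiset.card l) := by
  induction l using Multiset.induction with
  | empty => simp [Ideal.one_eq_top]
  | cons a l ih =>
    rw [Multiset.prod_cons, Multiset.card_cons, pow_succ']
    exact Ideal.mul_mem_mul (h a (Multiset.mem_cons_self a l))
      (ih fun x hx => h x (Multiset.mem_cons_of_mem hx))

lemma monomial_multiset_prod (l : Multiset (Fin n →₀ ℕ)) :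
    (l.map (fun v => (monomial v (1 : K) : R))).prod = monomial l.sum 1 := by
  induction l using Multiset.induction with
  | empty => simp [MvPolynomial.monomial_zero']
  | cons a l ih =>
    rw [Multiset.map_cons, Multiset.prod_cons, ih, Multiset.sum_cons,
      MvPolynomial.monomial_mul, one_mul]

/-- Key lemma: if `f ^ k ∈ I ^ k` for a monomial ideal `I`, then every monomial
in the support of `f` satisfies the power condition. -/
lemma support_pow_cond {I : Ideal R} (hI : IsMonomialIdeal I) {f : R} {k : ℕ}
    (hk : 1 ≤ k) (hf : f ^ k ∈ I ^ k) {b : Fin n →₀ ℕ} (hb : b ∈ f.support) :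
    ∃ K' : ℕ, 1 ≤ K' ∧ (monomial b (1 : K) : R) ^ K' ∈ I ^ K' := by
  classical
  obtain ⟨l, hl0, hlsp, hlsum⟩ := spike_decomp f.support b hb
  set Kc := Multiset.card l with hKc
  have hspike : ∀ v, IsSpike f.support v → (monomial (k • v) (1 : K) : R) ∈ I ^ k := by
    intro v hv
    apply support_mem_monomialIdeal (hI.pow k) hf
    rw [MvPolynomial.mem_support_iff, coeff_pow_spike f v hv]
    exact pow_ne_zero _ (MvPolynomial.mem_support_iff.1 hv.1)
  refine ⟨k * Kc, Nat.one_le_iff_ne_zero.2 (Nat.mul_ne_zero (by omega) hl0), ?_⟩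
  rw [MvPolynomial.monomial_pow, one_pow]
  have hsum : (k * Kc) • b = (l.map (fun v => k • v)).sum := by
    rw [← Multiset.smul_sum, hlsum, smul_smul]
  rw [hsum, ← monomial_multiset_prod, Multiset.map_map]
  have hcard : Multiset.card (l.map (fun v => (monomial (k • v) (1 : K) : R))) = Kc := by
    rw [Multiset.card_map]
  have := multiset_prod_mem_pow (I ^ k) (l.map (fun v => (monomial (k • v) (1 : K) : R)))
    (by
      intro x hx
      rw [Multiset.mem_map] at hx
      obtain ⟨v, hv, rfl⟩ := hx
      exact hspike v (hlsp v hv))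
  rw [hcard, ← pow_mul] at this
  exact this

end Main

theorem integralClosure_borelFixed_aux {K : Type*} [Field K] {n : ℕ}
    (I : Ideal (MvPolynomial (Fin n) K)) (hmon : IsMonomialIdeal I)
    (hBF : IsBorelFixed I) :
    IsMonomialIdeal (monomialIntegralClosure I) ∧ IsBorelFixed (monomialIntegralClosure I) := by
  classical
  set T : Set (MvPolynomial (Fin n) K) :=
    {m | ∃ a : Fin n →₀ ℕ, m = (monomial a (1 : K) : MvPolynomial (Fin n) K) ∧
      ∃ k : ℕ, 1 ≤ k ∧ m ^ k ∈ I ^ k} with hT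
  have hclosure : monomialIntegralClosure I = Ideal.span T := rfl
  constructor
  · refine ⟨{a | ∃ k : ℕ, 1 ≤ k ∧ (monomial a (1 : K) : MvPolynomial (Fin n) K) ^ k ∈ I ^ k}, ?_⟩
    rw [hclosure]
    congr 1
    ext m
    constructor
    · rintro ⟨a, rfl, hk⟩; exact ⟨a, hk, rfl⟩
    · rintro ⟨a, hk, rfl⟩; exact ⟨a, rfl, hk⟩
  · intro c hc f hf
    set φ : MvPolynomial (Fin n) K →ₐ[K] MvPolynomial (Fin n) K := (aeval (fun j : Fin n =>
        ∑ i ∈ Finset.univ.filter (fun i : Fin n => i ≤ j),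
          (C (c i j) * X i : MvPolynomial (Fin n) K))) with hφ
    have hmapI : Ideal.map φ I ≤ I :=
      Ideal.map_le_iff_le_comap.2 (fun x hx => hBF c hc x hx)
    rw [hclosure] at hf ⊢
    have hmem : φ f ∈ Ideal.span (φ '' T) := by
      rw [← Ideal.map_span]
      exact Ideal.mem_map_of_mem φ hf
    refine Ideal.span_le.2 ?_ hmem
    rintro _ ⟨t, ⟨a, rfl, k, hk, hpow⟩, rfl⟩
    set g := φ (monomial a (1 : K)) with hg
    have hgk : g ^ k ∈ I ^ k := by
      rw [hg, ← map_pow]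
      have h1 : φ ((monomial a (1 : K) : MvPolynomial (Fin n) K) ^ k) ∈
          Ideal.map φ (I ^ k) := Ideal.mem_map_of_mem φ hpow
      rw [Ideal.map_pow] at h1
      exact Ideal.pow_right_mono hmapI k h1
    have hsup : ∀ b ∈ g.support, (monomial b (1 : K) : MvPolynomial (Fin n) K) ∈ T :=
      fun b hb => by
        obtain ⟨K', hK1, hK2⟩ := support_pow_cond hmon hk hgk hb
        exact ⟨b, rfl, K', hK1, hK2⟩
    rw [g.as_sum]
    refine Ideal.sum_mem _ ?_
    intro b hb
    have : (monomial b (MvPolynomial.coeff b g) : MvPolynomial (Fin n) K)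
        = C (MvPolynomial.coeff b g) * monomial b 1 := by
      rw [MvPolynomial.C_mul_monomial, mul_one]
    rw [this]
    exact Ideal.mul_mem_left _ _ (Ideal.subset_span (hsup b hb))

/-- If `I` is a Borel-fixed monomial ideal, then its integral closure is again a
Borel-fixed monomial ideal. -/
theorem integralClosure_borelFixed {K : Type*} [Field K] {n : ℕ}
    (I : Ideal (MvPolynomial (Fin n) K)) (hmon : IsMonomialIdeal I)
    (hBF : IsBorelFixed I) :
    IsMonomialIdeal (monomialIntegralClosure I) ∧ IsBorelFixed (monomialIntegralClosure I) :=
  integralClosure_borelFixed_aux I hmon hBF
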